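/- Let A : ℝ^p ⇉ ℝ^p be monotone, F : int Z → ℝ a ν-self-concordant barrier with positive definite Hessians, t₊ > 0 and t > 0 with t₊ = (1 - σ)t for σ ∈ (0,1). Fix z ∈ int Z, and let ū solve 0 ∈ t(∇F(z) + ∇²F(z)(ū - z)) + A(ū) and z̄₊ solve 0 ∈ t₊(∇F(z) + ∇²F(z)(z̄₊ - z)) + A(z̄₊). Then ‖z̄₊ - ū‖_z ≤ (σ/(1-σ)) (‖∇F(z)‖*_z + ‖ū - z‖_z), and consequently, writing λ_t(z) := ‖z - ū‖_z and λ_{t₊}(z) := ‖z - z̄₊‖_z, one has λ_{t₊}(z) ≤ λ_t(z) + (σ/(1-σ))(√ν + λ_t(z)). -/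

import Mathlib

open Matrix

/-- Weighted norm `‖u‖_H := ⟨H u, u⟩^{1/2}`. -/
noncomputable def wnorm {p : ℕ} (H : Matrix (Fin p) (Fin p) ℝ) (u : Fin p → ℝ) : ℝ :=
  Real.sqrt ((H *ᵥ u) ⬝ᵥ u)

/-- A multivalued operator `A : ℝ^p ⇉ ℝ^p` is monotone. -/
def MonotoneOp {p : ℕ} (A : (Fin p → ℝ) → Set (Fin p → ℝ)) : Prop :=
  ∀ z1 z2 w1 w2 : Fin p → ℝ, w1 ∈ A z1 → w2 ∈ A z2 → 0 ≤ (w1 - w2) ⬝ᵥ (z1 - z2)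

section Aux
variable {p : ℕ} {H : Matrix (Fin p) (Fin p) ℝ}

lemma quad_nonneg (hH : H.PosSemidef) (u : Fin p → ℝ) : 0 ≤ (H *ᵥ u) ⬝ᵥ u := by
  simpa [dotProduct_comm] using hH.dotProduct_mulVec_nonneg u

lemma symm_dot (hH : H.IsHermitian) (u v : Fin p → ℝ) :
    (H *ᵥ u) ⬝ᵥ v = (H *ᵥ v) ⬝ᵥ u := by
  have hT : Hᵀ = H := by
    rw [← Matrix.conjTranspose_eq_transpose_of_trivial]; exact hH
  calc (H *ᵥ u) ⬝ᵥ v = v ⬝ᵥ (H *ᵥ u) := dotProduct_comm _ _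
    _ = (v ᵥ* H) ⬝ᵥ u := Matrix.dotProduct_mulVec _ _ _
    _ = (Hᵀ *ᵥ v) ⬝ᵥ u := by rw [Matrix.mulVec_transpose]
    _ = (H *ᵥ v) ⬝ᵥ u := by rw [hT]

lemma wnorm_sq (hH : H.PosSemidef) (u : Fin p → ℝ) :
    wnorm H u ^ 2 = (H *ᵥ u) ⬝ᵥ u := Real.sq_sqrt (quad_nonneg hH u)

lemma cs (hH : H.PosSemidef) (u v : Fin p → ℝ) :
    (H *ᵥ u) ⬝ᵥ v ≤ wnorm H u * wnorm H v := by
  set a := (H *ᵥ v) ⬝ᵥ v with ha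
  set b := 2 * ((H *ᵥ u) ⬝ᵥ v) with hb
  set c := (H *ᵥ u) ⬝ᵥ u with hc
  have hquad : ∀ x : ℝ, 0 ≤ a * (x * x) + b * x + c := by
    intro x
    have h0 := quad_nonneg hH (u + x • v)
    have hexp : (H *ᵥ (u + x • v)) ⬝ᵥ (u + x • v) = a * (x * x) + b * x + c := by
      simp only [Matrix.mulVec_add, Matrix.mulVec_smul, add_dotProduct,
        smul_dotProduct, dotProduct_add, dotProduct_smul, smul_eq_mul,
        ha, hb, hc]
      rw [symm_dot hH.1 v u]; ring
    linarith [hexp ▸ h0]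
  have hd := discrim_le_zero hquad
  rw [discrim] at hd
  calc (H *ᵥ u) ⬝ᵥ v ≤ |(H *ᵥ u) ⬝ᵥ v| := le_abs_self _
    _ = Real.sqrt (((H *ᵥ u) ⬝ᵥ v) ^ 2) := (Real.sqrt_sq_eq_abs _).symm
    _ ≤ Real.sqrt (c * a) := Real.sqrt_le_sqrt (by rw [hb] at hd; nlinarith [hd])
    _ = Real.sqrt c * Real.sqrt a := Real.sqrt_mul (quad_nonneg hH u) a
    _ = wnorm H u * wnorm H v := rfl

lemma wnorm_triangle (hH : H.PosSemidef) (u v : Fin p → ℝ) :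
    wnorm H (u + v) ≤ wnorm H u + wnorm H v := by
  have hcs := cs hH u v
  have hu := quad_nonneg hH u
  have hv := quad_nonneg hH v
  have h1 : (H *ᵥ (u + v)) ⬝ᵥ (u + v) ≤ (wnorm H u + wnorm H v) ^ 2 := by
    have hexp : (H *ᵥ (u + v)) ⬝ᵥ (u + v)
        = (H *ᵥ u) ⬝ᵥ u + 2 * ((H *ᵥ u) ⬝ᵥ v) + (H *ᵥ v) ⬝ᵥ v := by
      simp only [Matrix.mulVec_add, add_dotProduct, dotProduct_add]
      rw [symm_dot hH.1 v u]; ring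
    have h2 : wnorm H u ^ 2 = (H *ᵥ u) ⬝ᵥ u := wnorm_sq hH u
    have h3 : wnorm H v ^ 2 = (H *ᵥ v) ⬝ᵥ v := wnorm_sq hH v
    nlinarith
  calc wnorm H (u + v) ≤ Real.sqrt ((wnorm H u + wnorm H v) ^ 2) := Real.sqrt_le_sqrt h1
    _ = |wnorm H u + wnorm H v| := Real.sqrt_sq_eq_abs _
    _ = wnorm H u + wnorm H v := abs_of_nonneg (add_nonneg (Real.sqrt_nonneg _) (Real.sqrt_nonneg _))

lemma wnorm_neg (u : Fin p → ℝ) : wnorm H (-u) = wnorm H u := by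
  unfold wnorm
  simp [Matrix.mulVec_neg, neg_dotProduct, dotProduct_neg]

end Aux

/-- Effect of the penalty-parameter update `t₊ = (1-σ)t` on the generalized Newton
decrement: with `ū`, `z̄₊` the solutions of the linearized inclusions at `t` and `t₊`,
one has `‖z̄₊ - ū‖_z ≤ (σ/(1-σ))(‖∇F(z)‖*_z + ‖ū - z‖_z)` and hence
`λ_{t₊}(z) ≤ λ_t(z) + (σ/(1-σ))(√ν + λ_t(z))`. -/
theorem penalty_update_decrement_bound {p : ℕ}
    (Z : Set (Fin p → ℝ)) (hZconv : Convex ℝ Z)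
    (F : (Fin p → ℝ) → ℝ)
    (gradF : (Fin p → ℝ) → (Fin p → ℝ))
    (hessF : (Fin p → ℝ) → Matrix (Fin p) (Fin p) ℝ)
    (hGrad : ∀ z ∈ interior Z, ∀ v : Fin p → ℝ,
      deriv (fun s : ℝ => F (z + s • v)) 0 = (gradF z) ⬝ᵥ v)
    (hHess : ∀ z ∈ interior Z, ∀ v : Fin p → ℝ,
      iteratedDeriv 2 (fun s : ℝ => F (z + s • v)) 0 = ((hessF z) *ᵥ v) ⬝ᵥ v)
    (hpd : ∀ z ∈ interior Z, (hessF z).PosDef)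
    (hsc : ∀ z ∈ interior Z, ∀ v : Fin p → ℝ,
      |iteratedDeriv 3 (fun s : ℝ => F (z + s • v)) 0| ≤
        2 * (((hessF z) *ᵥ v) ⬝ᵥ v) ^ ((3 : ℝ) / 2))
    (ν : ℝ) (hν : 0 < ν)
    (hbar : ∀ z ∈ interior Z, ∀ u : Fin p → ℝ,
      2 * ((gradF z) ⬝ᵥ u) - ((hessF z) *ᵥ u) ⬝ᵥ u ≤ ν)
    (A : (Fin p → ℝ) → Set (Fin p → ℝ)) (hA : MonotoneOp A)
    (σ t tplus : ℝ) (hσ0 : 0 < σ) (hσ1 : σ < 1) (ht : 0 < t)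
    (htplus : tplus = (1 - σ) * t)
    (z : Fin p → ℝ) (hz : z ∈ interior Z)
    (ubar zbar : Fin p → ℝ)
    (hubar : -(t • (gradF z + (hessF z) *ᵥ (ubar - z))) ∈ A ubar)
    (hzbar : -(tplus • (gradF z + (hessF z) *ᵥ (zbar - z))) ∈ A zbar) :
    wnorm (hessF z) (zbar - ubar) ≤
      (σ / (1 - σ)) * (wnorm (hessF z)⁻¹ (gradF z) + wnorm (hessF z) (ubar - z)) ∧
    wnorm (hessF z) (z - zbar) ≤
      wnorm (hessF z) (z - ubar) +
        (σ / (1 - σ)) * (Real.sqrt ν + wnorm (hessF z) (z - ubar)) := by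
  classical
  have hpdz := hpd z hz
  have hps : (hessF z).PosSemidef := hpdz.posSemidef
  set H := hessF z with hHdef
  set g := gradF z with hgdef
  have h1σ : (0:ℝ) < 1 - σ := by linarith
  have hdet : IsUnit H.det := isUnit_iff_ne_zero.mpr (ne_of_gt hpdz.det_pos)
  have hHinv : H *ᵥ (H⁻¹ *ᵥ g) = g := by
    rw [Matrix.mulVec_mulVec, Matrix.mul_nonsing_inv _ hdet, Matrix.one_mulVec]
  have h0 := hA ubar zbar _ _ hubar hzbar
  have hkey : (1 - σ) * t * ((H *ᵥ (zbar - ubar)) ⬝ᵥ (zbar - ubar)) ≤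
      σ * t * ((g ⬝ᵥ (zbar - ubar)) + (H *ᵥ (ubar - z)) ⬝ᵥ (zbar - ubar)) := by
    subst htplus
    simp only [Matrix.mulVec_sub, Matrix.mulVec_add, sub_dotProduct,
      add_dotProduct, dotProduct_sub, dotProduct_add,
      neg_dotProduct, smul_dotProduct, smul_eq_mul] at h0 ⊢
    ring_nf at h0 ⊢
    linarith
  have hNd0 : 0 ≤ wnorm H (zbar - ubar) := Real.sqrt_nonneg _
  have hd2 : (H *ᵥ (zbar - ubar)) ⬝ᵥ (zbar - ubar) = wnorm H (zbar - ubar) ^ 2 :=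
    (wnorm_sq hps _).symm
  have hgd : g ⬝ᵥ (zbar - ubar) ≤ wnorm H⁻¹ g * wnorm H (zbar - ubar) := by
    have hcs := cs hps (H⁻¹ *ᵥ g) (zbar - ubar)
    rw [hHinv] at hcs
    have heq : wnorm H (H⁻¹ *ᵥ g) = wnorm H⁻¹ g := by
      unfold wnorm; rw [hHinv, dotProduct_comm]
    rwa [heq] at hcs
  have hed : (H *ᵥ (ubar - z)) ⬝ᵥ (zbar - ubar) ≤
      wnorm H (ubar - z) * wnorm H (zbar - ubar) := cs hps _ _
  have ha0 : 0 ≤ wnorm H⁻¹ g := Real.sqrt_nonneg _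
  have hb0 : 0 ≤ wnorm H (ubar - z) := Real.sqrt_nonneg _
  have hfirst : wnorm H (zbar - ubar) ≤
      (σ / (1 - σ)) * (wnorm H⁻¹ g + wnorm H (ubar - z)) := by
    rcases eq_or_lt_of_le hNd0 with h | h
    · rw [← h]
      exact mul_nonneg (div_nonneg hσ0.le h1σ.le) (add_nonneg ha0 hb0)
    · rw [div_mul_eq_mul_div, le_div_iff₀ h1σ]
      have hmain : (1 - σ) * t * (wnorm H (zbar - ubar)) ^ 2 ≤
          σ * t * ((wnorm H⁻¹ g + wnorm H (ubar - z)) * wnorm H (zbar - ubar)) := by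
        nlinarith [hkey, hgd, hed, mul_pos hσ0 ht]
      nlinarith [hmain, mul_pos ht h, h]
  have hgν : wnorm H⁻¹ g ≤ Real.sqrt ν := by
    have hb := hbar z hz (H⁻¹ *ᵥ g)
    rw [hHinv] at hb
    unfold wnorm
    apply Real.sqrt_le_sqrt
    rw [dotProduct_comm]
    linarith
  have htri : wnorm H (z - zbar) ≤ wnorm H (z - ubar) + wnorm H (zbar - ubar) := by
    have h1 : z - zbar = (z - ubar) + (ubar - zbar) := (sub_add_sub_cancel z ubar zbar).symm
    have h2 := wnorm_triangle hps (z - ubar) (ubar - zbar)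
    have h3 : wnorm H (ubar - zbar) = wnorm H (zbar - ubar) := by
      rw [← wnorm_neg (H := H) (zbar - ubar), neg_sub]
    rw [h1]; rw [h3] at h2; exact h2
  have huz : wnorm H (ubar - z) = wnorm H (z - ubar) := by
    rw [← wnorm_neg (H := H) (z - ubar), neg_sub]
  have hc0 : 0 ≤ σ / (1 - σ) := div_nonneg hσ0.le h1σ.le
  refine ⟨hfirst, ?_⟩
  have hstep : wnorm H (zbar - ubar) ≤
      (σ / (1 - σ)) * (Real.sqrt ν + wnorm H (z - ubar)) := by
    refine le_trans hfirst ?_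
    refine mul_le_mul_of_nonneg_left ?_ hc0
    rw [huz]
    exact add_le_add_left hgν _
  linarith
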